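/- arXiv:1001.2070 — 5 statements merged into one kernel-verified Lean document; each statement's English description precedes it below -/
import Mathlib

section
/- Let r ≥ 2 and let G be a maximal K_{r+1}-free graph (adding any edge creates a K_{r+1}) with δ(G) > (1 - 2/(2r-1))·n where n is the number of vertices. Then for any two nonadjacent vertices u and w, the common neighborhood of u and w contains a clique on r-1 vertices. -/
theorem stmt4 {V : Type*} [Fintype V] (G : SimpleGraph V) [DecidableRel G.Adj]
    (r : ℕ) (hr : 2 ≤ r)
    (hmax : Maximal (fun H : SimpleGraph V => H.CliqueFree (r + 1)) G)
    (hδ : ((1 : ℝ) - 2 / (2 * r - 1)) * (Fintype.card V) < G.minDegree) :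
    ∀ u w : V, u ≠ w → ¬G.Adj u w →
      ∃ T : Finset V, (∀ x ∈ T, G.Adj u x ∧ G.Adj w x) ∧ G.IsNClique (r - 1) T := by
  classical
  intro u w hne hadj
  have hsupadj : (G ⊔ SimpleGraph.edge u w).Adj u w :=
    Or.inr ((SimpleGraph.edge_adj u w u w).2 ⟨Or.inl ⟨rfl, rfl⟩, hne⟩)
  have hsup : ¬ (G ⊔ SimpleGraph.edge u w).CliqueFree (r + 1) := by
    intro h
    exact hadj (hmax.2 h le_sup_left hsupadj)
  simp only [SimpleGraph.CliqueFree, not_forall, not_not] at hsup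
  obtain ⟨s, hs⟩ := hsup
  have hedge : ∀ a b : V, (SimpleGraph.edge u w).Adj a b →
      (a = u ∧ b = w) ∨ (a = w ∧ b = u) := by
    intro a b hab
    exact ((SimpleGraph.edge_adj u w a b).1 hab).1
  have hus : u ∈ s := by
    by_contra hus
    refine hmax.1 s ⟨?_, hs.2⟩
    intro a ha b hb hab
    rcases hs.1 ha hb hab with h | h
    · exact h
    · rcases hedge a b h with ⟨rfl, rfl⟩ | ⟨rfl, rfl⟩
      · exact absurd ha hus
      · exact absurd hb hus
  have hws : w ∈ s := by
    by_contra hws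
    refine hmax.1 s ⟨?_, hs.2⟩
    intro a ha b hb hab
    rcases hs.1 ha hb hab with h | h
    · exact h
    · rcases hedge a b h with ⟨rfl, rfl⟩ | ⟨rfl, rfl⟩
      · exact absurd hb hws
      · exact absurd ha hws
  refine ⟨(s.erase u).erase w, ?_, ?_, ?_⟩
  · intro x hx
    have hxw : x ≠ w := Finset.ne_of_mem_erase hx
    have hxu : x ≠ u := Finset.ne_of_mem_erase (Finset.mem_of_mem_erase hx)
    have hxs : x ∈ s := Finset.mem_of_mem_erase (Finset.mem_of_mem_erase hx)
    constructor
    · rcases hs.1 hus hxs (Ne.symm hxu) with h | h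
      · exact h
      · rcases hedge u x h with ⟨_, rfl⟩ | ⟨h1, _⟩
        · exact absurd rfl hxw
        · exact absurd h1 hne
    · rcases hs.1 hws hxs (Ne.symm hxw) with h | h
      · exact h
      · rcases hedge w x h with ⟨h1, _⟩ | ⟨_, rfl⟩
        · exact absurd h1 hne.symm
        · exact absurd rfl hxu
  · intro a ha b hb hab
    have haw : a ≠ w := Finset.ne_of_mem_erase ha
    have hau : a ≠ u := Finset.ne_of_mem_erase (Finset.mem_of_mem_erase ha)
    have has : a ∈ s := Finset.mem_of_mem_erase (Finset.mem_of_mem_erase ha)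
    have hbs : b ∈ s := Finset.mem_of_mem_erase (Finset.mem_of_mem_erase hb)
    rcases hs.1 has hbs hab with h | h
    · exact h
    · rcases hedge a b h with ⟨rfl, _⟩ | ⟨rfl, _⟩
      · exact absurd rfl hau
      · exact absurd rfl haw
  · rw [Finset.card_erase_of_mem (Finset.mem_erase_of_ne_of_mem (Ne.symm hne) hws),
      Finset.card_erase_of_mem hus, hs.2]
    omega
end

section
/- Let r ≥ 3 and let G be a maximal K_{r+1}-free graph on n vertices with δ(G) > (1 - 2/(2r-1))·n. Then for every vertex u and every vertex w not adjacent to u (w ≠ u), the number of common neighbors of u and w is at least d(u) + d(w) - (r-1)(n - δ(G)). -/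
open Finset in
theorem stmt5 {V : Type*} [Fintype V] [DecidableEq V] (G : SimpleGraph V) [DecidableRel G.Adj]
    (r : ℕ) (hr : 3 ≤ r)
    (hmax : Maximal (fun H : SimpleGraph V => H.CliqueFree (r + 1)) G)
    (hδ : ((1 : ℝ) - 2 / (2 * r - 1)) * (Fintype.card V) < G.minDegree) :
    ∀ u w : V, w ≠ u → ¬G.Adj u w →
      (G.degree u : ℝ) + G.degree w -
          (r - 1) * ((Fintype.card V : ℝ) - G.minDegree) ≤
        (univ.filter fun x => G.Adj u x ∧ G.Adj w x).card := by
  intro u w hwu hadj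
  have : Nonempty V := ⟨u⟩
  have hfree := hmax.1
  -- the supergraph G ⊔ edge u w has an (r+1)-clique
  have hne : ¬ (G ⊔ SimpleGraph.edge u w).CliqueFree (r + 1) := by
    intro h
    have hle : G ⊔ SimpleGraph.edge u w ≤ G := hmax.2 h le_sup_left
    exact hadj (hle (by simp [SimpleGraph.edge_adj, hwu, hwu.symm]))
  rw [SimpleGraph.CliqueFree] at hne
  push_neg at hne
  obtain ⟨t, ht⟩ := hne
  have hut : u ∈ t := by
    by_contra hu
    refine hfree t ⟨?_, ht.2⟩
    intro x hx y hy hxy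
    rcases ht.1 hx hy hxy with h | h
    · exact h
    · rw [SimpleGraph.edge_adj] at h
      rcases h.1 with ⟨rfl, _⟩ | ⟨_, rfl⟩
      · exact absurd (Finset.mem_coe.mp hx) hu
      · exact absurd (Finset.mem_coe.mp hy) hu
  have hwt : w ∈ t := by
    by_contra hw
    refine hfree t ⟨?_, ht.2⟩
    intro x hx y hy hxy
    rcases ht.1 hx hy hxy with h | h
    · exact h
    · rw [SimpleGraph.edge_adj] at h
      rcases h.1 with ⟨_, rfl⟩ | ⟨rfl, _⟩
      · exact absurd (Finset.mem_coe.mp hy) hw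
      · exact absurd (Finset.mem_coe.mp hx) hw
  set S : Finset V := (t.erase u).erase w with hS
  have hSmem : ∀ s ∈ S, s ∈ t ∧ s ≠ u ∧ s ≠ w := by
    intro s hs
    simp only [hS, mem_erase] at hs
    exact ⟨hs.2.2, hs.2.1, hs.1⟩
  have hGadj : ∀ x ∈ t, ∀ y ∈ t, x ≠ y → (x ≠ u ∨ y ≠ w) → (x ≠ w ∨ y ≠ u) → G.Adj x y := by
    intro x hx y hy hxy h1 h2
    rcases ht.1 hx hy hxy with h | h
    · exact h
    · rw [SimpleGraph.edge_adj] at h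
      rcases h.1 with ⟨rfl, rfl⟩ | ⟨rfl, rfl⟩
      · rcases h1 with h1 | h1 <;> simp at h1
      · rcases h2 with h2 | h2 <;> simp at h2
  have hSu : ∀ s ∈ S, G.Adj u s := by
    intro s hs
    obtain ⟨hst, hsu, hsw⟩ := hSmem s hs
    exact hGadj u hut s hst (Ne.symm hsu) (Or.inr hsw) (Or.inl (Ne.symm hwu))
  have hSw : ∀ s ∈ S, G.Adj w s := by
    intro s hs
    obtain ⟨hst, hsu, hsw⟩ := hSmem s hs
    exact hGadj w hwt s hst (Ne.symm hsw) (Or.inl hwu) (Or.inr hsu)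
  have hSclique : G.IsClique (S : Set V) := by
    intro x hx y hy hxy
    obtain ⟨hxt, hxu, hxw⟩ := hSmem x hx
    obtain ⟨hyt, hyu, hyw⟩ := hSmem y hy
    exact hGadj x hxt y hyt hxy (Or.inl hxu) (Or.inl hxw)
  have hScard : S.card = r - 1 := by
    have hwt' : w ∈ t.erase u := mem_erase.2 ⟨hwu, hwt⟩
    rw [hS, card_erase_of_mem hwt', card_erase_of_mem hut, ht.2]
    omega
  -- every vertex adjacent to u or w misses some vertex of S
  have hkey : ∀ x : V, (G.Adj u x ∨ G.Adj w x) → ∃ s ∈ S, ¬ G.Adj s x := by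
    intro x hx
    by_contra hcon
    push_neg at hcon
    have hxS : x ∉ S := fun h => G.irrefl (hcon x h)
    rcases hx with hx | hx
    · have huS : u ∉ S := fun h => (hSmem u h).2.1 rfl
      refine hfree (insert x (insert u S)) ⟨?_, ?_⟩
      · rw [coe_insert, coe_insert]
        refine (hSclique.insert ?_).insert ?_
        · intro b hb _; exact hSu b hb
        · intro b hb _
          rcases hb with rfl | hb
          · exact hx.symm
          · exact (hcon b hb).symm
      · rw [card_insert_of_notMem (by simp [hxS, hx.ne']),
          card_insert_of_notMem huS, hScard]; omega
    · have hwS : w ∉ S := fun h => (hSmem w h).2.2 rfl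
      refine hfree (insert x (insert w S)) ⟨?_, ?_⟩
      · rw [coe_insert, coe_insert]
        refine (hSclique.insert ?_).insert ?_
        · intro b hb _; exact hSw b hb
        · intro b hb _
          rcases hb with rfl | hb
          · exact hx.symm
          · exact (hcon b hb).symm
      · rw [card_insert_of_notMem (by simp [hxS, hx.ne']),
          card_insert_of_notMem hwS, hScard]; omega
  -- counting
  set n := Fintype.card V
  set δ := G.minDegree
  have hsub : G.neighborFinset u ∪ G.neighborFinset w ⊆
      S.biUnion (fun s => univ.filter fun x => ¬ G.Adj s x) := by
    intro x hx
    rw [mem_union, SimpleGraph.mem_neighborFinset, SimpleGraph.mem_neighborFinset] at hx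
    obtain ⟨s, hs, hns⟩ := hkey x hx
    exact mem_biUnion.2 ⟨s, hs, mem_filter.2 ⟨mem_univ x, hns⟩⟩
  have hfilt : ∀ s : V, (univ.filter fun x => ¬ G.Adj s x).card = n - G.degree s := by
    intro s
    have := Finset.card_filter_add_card_filter_not (s := (univ : Finset V))
      (p := fun x => G.Adj s x)
    rw [Finset.card_univ] at this
    have hdeg : (univ.filter fun x => G.Adj s x).card = G.degree s := by
      rw [SimpleGraph.degree, SimpleGraph.neighborFinset_eq_filter]
    omega
  have hunion : (G.neighborFinset u ∪ G.neighborFinset w).card ≤ (r - 1) * (n - δ) := by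
    calc (G.neighborFinset u ∪ G.neighborFinset w).card
        ≤ (S.biUnion fun s => univ.filter fun x => ¬ G.Adj s x).card := card_le_card hsub
      _ ≤ ∑ s ∈ S, (univ.filter fun x => ¬ G.Adj s x).card := card_biUnion_le
      _ ≤ ∑ s ∈ S, (n - δ) := by
          refine sum_le_sum fun s _ => ?_
          rw [hfilt s]
          exact Nat.sub_le_sub_left (G.minDegree_le_degree s) n
      _ = (r - 1) * (n - δ) := by rw [sum_const, hScard, smul_eq_mul]
  have hinter : (univ.filter fun x => G.Adj u x ∧ G.Adj w x)
      = G.neighborFinset u ∩ G.neighborFinset w := by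
    ext x; simp [SimpleGraph.mem_neighborFinset]
  have hie := Finset.card_union_add_card_inter (G.neighborFinset u) (G.neighborFinset w)
  rw [SimpleGraph.card_neighborFinset_eq_degree, SimpleGraph.card_neighborFinset_eq_degree] at hie
  have hδn : δ ≤ n := (G.minDegree_le_degree u).trans (by
    rw [← SimpleGraph.card_neighborFinset_eq_degree]
    exact Finset.card_le_univ _)
  rw [hinter]
  have h1 : ((G.neighborFinset u ∪ G.neighborFinset w).card : ℝ) ≤ ((r : ℝ) - 1) * ((n : ℝ) - δ) := by
    calc ((G.neighborFinset u ∪ G.neighborFinset w).card : ℝ)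
        ≤ (((r - 1) * (n - δ) : ℕ) : ℝ) := by exact_mod_cast hunion
      _ = ((r : ℝ) - 1) * ((n : ℝ) - δ) := by
          push_cast [Nat.cast_sub hδn, Nat.cast_sub (by omega : 1 ≤ r)]
          ring
  have h2 : ((G.degree u : ℝ)) + G.degree w =
      ((G.neighborFinset u ∪ G.neighborFinset w).card : ℝ) +
      ((G.neighborFinset u ∩ G.neighborFinset w).card : ℝ) := by exact_mod_cast hie.symm
  linarith
end

section
/- Let r ≥ 3 and let G be a maximal K_{r+1}-free graph on n vertices with δ(G) > (1 - 2/(2r-1))·n. Then for every vertex u, the subgraph of G induced on the non-neighbors of u is triangle-free. -/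
open Finset

/-- Min-degree Turán-type bound: if `T` spans no `(s+1)`-clique and every vertex of `T`
has at most `b` non-neighbors (weakly, counting itself) inside `T`, then `|T| ≤ s * b`. -/
lemma stmt6_turan_bound {V : Type*} [Fintype V] (G : SimpleGraph V) [DecidableRel G.Adj]
    (b : ℝ) (hb : 0 ≤ b) :
    ∀ (s : ℕ) (T : Finset V), (∀ K ⊆ T, ¬ G.IsNClique (s + 1) K) →
      (∀ v ∈ T, (((T.filter (fun w => ¬ G.Adj v w)).card : ℝ)) ≤ b) →
      (T.card : ℝ) ≤ s * b := by
  classical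
  intro s
  induction s with
  | zero =>
      intro T hfree _
      have hT : T = ∅ := by
        by_contra hne
        obtain ⟨v, hv⟩ := Finset.nonempty_iff_ne_empty.2 hne
        refine hfree {v} (by simpa using hv) ?_
        refine ⟨?_, by simp⟩
        simp [SimpleGraph.IsClique, Set.pairwise_singleton]
      simp [hT]
  | succ s ih =>
      intro T hfree hdeg
      rcases T.eq_empty_or_nonempty with rfl | ⟨v, hv⟩
      · simp only [Finset.card_empty, Nat.cast_zero]
        exact mul_nonneg (by positivity) hb
      · have h1 : ∀ K ⊆ T.filter (fun w => G.Adj v w), ¬ G.IsNClique (s + 1) K := by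
          intro K hK hclq
          have h2 : G.IsNClique (s + 1 + 1) (insert v K) :=
            hclq.insert (fun b hb => (Finset.mem_filter.1 (hK hb)).2)
          exact hfree (insert v K)
            (Finset.insert_subset hv (hK.trans (Finset.filter_subset _ _))) h2
        have h2 : ∀ w ∈ T.filter (fun w => G.Adj v w),
            (((T.filter (fun w => G.Adj v w)).filter (fun z => ¬ G.Adj w z)).card : ℝ) ≤ b := by
          intro w hw
          refine le_trans ?_ (hdeg w (Finset.filter_subset _ _ hw))
          exact_mod_cast Finset.card_le_card
            (Finset.filter_subset_filter _ (Finset.filter_subset _ _))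
        have h3 := ih (T.filter (fun w => G.Adj v w)) h1 h2
        have h4 := hdeg v hv
        have h5 : (T.filter (fun w => G.Adj v w)).card
            + (T.filter (fun w => ¬ G.Adj v w)).card = T.card :=
          Finset.card_filter_add_card_filter_not _
        have h6 : (T.card : ℝ) = ((T.filter (fun w => G.Adj v w)).card : ℝ)
            + ((T.filter (fun w => ¬ G.Adj v w)).card : ℝ) := by exact_mod_cast h5.symm
        rw [h6]
        push_cast
        linarith

/-- From maximality of a `K_{r+1}`-free graph: every non-edge `(u,x)` has an
`(r-1)`-clique in the common neighborhood. -/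
lemma stmt6_sat_clique {V : Type*} [Fintype V] (G : SimpleGraph V) [DecidableRel G.Adj] {r : ℕ}
    (hmax : Maximal (fun H : SimpleGraph V => H.CliqueFree (r + 1)) G)
    {u x : V} (hne : u ≠ x) (hnadj : ¬ G.Adj u x) :
    ∃ A : Finset V, A.card + 2 = r + 1 ∧ G.IsClique ↑A ∧ ∀ a ∈ A, G.Adj u a ∧ G.Adj x a := by
  classical
  set H : SimpleGraph V := G ⊔ SimpleGraph.fromEdgeSet {s(u, x)} with hHdef
  have hle : G ≤ H := le_sup_left
  have hHadj : H.Adj u x := by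
    simp [hHdef, SimpleGraph.fromEdgeSet_adj, hne]
  have hHnf : ¬ H.CliqueFree (r + 1) := by
    intro hfree
    exact hnadj (hmax.2 hfree hle hHadj)
  rw [SimpleGraph.CliqueFree] at hHnf
  push_neg at hHnf
  obtain ⟨K, hK⟩ := hHnf
  have hpair : ∀ a ∈ K, ∀ b ∈ K, a ≠ b → H.Adj a b := fun a ha b hb hab =>
    hK.1 (Finset.mem_coe.2 ha) (Finset.mem_coe.2 hb) hab
  have transfer : ∀ a b : V, (a ≠ u ∨ b ≠ x) → (a ≠ x ∨ b ≠ u) → H.Adj a b → G.Adj a b := by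
    intro a b h1 h2 hab
    rw [hHdef, SimpleGraph.sup_adj] at hab
    rcases hab with h | h
    · exact h
    · exfalso
      rw [SimpleGraph.fromEdgeSet_adj] at h
      obtain ⟨hm, hne'⟩ := h
      simp only [Set.mem_singleton_iff, Sym2.eq_iff] at hm
      rcases hm with ⟨ha, hb⟩ | ⟨ha, hb⟩
      · subst ha; subst hb; tauto
      · subst ha; subst hb; tauto
  have huK : u ∈ K := by
    by_contra huK
    refine hmax.1 K ⟨?_, hK.2⟩
    intro a ha b hb hab
    have haK : a ∈ K := Finset.mem_coe.1 ha
    have hbK : b ∈ K := Finset.mem_coe.1 hb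
    exact transfer a b (Or.inl (fun h => huK (h ▸ haK))) (Or.inr (fun h => huK (h ▸ hbK)))
      (hpair a haK b hbK hab)
  have hxK : x ∈ K := by
    by_contra hxK
    refine hmax.1 K ⟨?_, hK.2⟩
    intro a ha b hb hab
    have haK : a ∈ K := Finset.mem_coe.1 ha
    have hbK : b ∈ K := Finset.mem_coe.1 hb
    exact transfer a b (Or.inr (fun h => hxK (h ▸ hbK))) (Or.inl (fun h => hxK (h ▸ haK)))
      (hpair a haK b hbK hab)
  refine ⟨(K.erase u).erase x, ?_, ?_, ?_⟩
  · have hxKu : x ∈ K.erase u := Finset.mem_erase.2 ⟨hne.symm, hxK⟩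
    have c0 : 1 < K.card := Finset.one_lt_card.2 ⟨u, huK, x, hxK, hne⟩
    have c1 : (K.erase u).card = K.card - 1 := Finset.card_erase_of_mem huK
    have c2 : ((K.erase u).erase x).card = (K.erase u).card - 1 :=
      Finset.card_erase_of_mem hxKu
    have c3 : K.card = r + 1 := hK.2
    omega
  · intro a ha b hb hab
    have ha' := Finset.mem_erase.1 (Finset.mem_coe.1 ha)
    have ha'' := Finset.mem_erase.1 ha'.2
    have hb' := Finset.mem_erase.1 (Finset.mem_coe.1 hb)
    have hb'' := Finset.mem_erase.1 hb'.2
    exact transfer a b (Or.inl ha''.1) (Or.inl ha'.1) (hpair a ha''.2 b hb''.2 hab)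
  · intro a ha
    have ha' := Finset.mem_erase.1 ha
    have ha'' := Finset.mem_erase.1 ha'.2
    constructor
    · exact transfer u a (Or.inr ha'.1) (Or.inl hne) (hpair u huK a ha''.2 (Ne.symm ha''.1))
    · exact transfer x a (Or.inl hne.symm) (Or.inr ha''.1) (hpair x hxK a ha''.2 (Ne.symm ha'.1))

theorem stmt6 {V : Type*} [Fintype V] (G : SimpleGraph V) [DecidableRel G.Adj]
    (r : ℕ) (hr : 3 ≤ r)
    (hmax : Maximal (fun H : SimpleGraph V => H.CliqueFree (r + 1)) G)
    (hδ : ((1 : ℝ) - 2 / (2 * r - 1)) * (Fintype.card V) < G.minDegree) :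
    ∀ u : V, (G.induce {v : V | v ≠ u ∧ ¬G.Adj u v}).CliqueFree 3 := by
  classical
  intro u
  haveI : Nonempty V := ⟨u⟩
  by_contra hcf
  rw [SimpleGraph.CliqueFree] at hcf
  push_neg at hcf
  obtain ⟨t, ht⟩ := hcf
  obtain ⟨x', y', z', hxy', hxz', hyz', hteq⟩ := Finset.card_eq_three.1 ht.card_eq
  have hx't : x' ∈ t := by rw [hteq]; simp
  have hy't : y' ∈ t := by rw [hteq]; simp
  have hz't : z' ∈ t := by rw [hteq]; simp
  set x : V := ↑x' with hxdef
  set y : V := ↑y' with hydef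
  set z : V := ↑z' with hzdef
  have hxu : x ≠ u := x'.2.1
  have hyu : y ≠ u := y'.2.1
  have hzu : z ≠ u := z'.2.1
  have hux : ¬ G.Adj u x := x'.2.2
  have huy : ¬ G.Adj u y := y'.2.2
  have huz : ¬ G.Adj u z := z'.2.2
  have axy : G.Adj x y := by
    have h := ht.1 (Finset.mem_coe.2 hx't) (Finset.mem_coe.2 hy't) hxy'
    simpa using h
  have axz : G.Adj x z := by
    have h := ht.1 (Finset.mem_coe.2 hx't) (Finset.mem_coe.2 hz't) hxz'
    simpa using h
  have ayz : G.Adj y z := by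
    have h := ht.1 (Finset.mem_coe.2 hy't) (Finset.mem_coe.2 hz't) hyz'
    simpa using h
  set n : ℕ := Fintype.card V with hn
  set cb : ℝ := 2 * (n : ℝ) / (2 * (r : ℝ) - 1) with hcb
  have hrR : (3 : ℝ) ≤ (r : ℝ) := by exact_mod_cast hr
  have h2r : (0 : ℝ) < 2 * (r : ℝ) - 1 := by linarith
  have hnpos : 0 < n := Fintype.card_pos
  have hnR : (0 : ℝ) < (n : ℝ) := by exact_mod_cast hnpos
  set M : V → Finset V := fun v => univ.filter (fun w => ¬ G.Adj v w) with hM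
  have hMcard : ∀ v, ((M v).card : ℝ) < cb := by
    intro v
    have h1 : (univ.filter (fun w => G.Adj v w)).card + (M v).card = n := by
      have h := Finset.card_filter_add_card_filter_not
        (s := (univ : Finset V)) (p := fun w => G.Adj v w)
      simpa [hM, hn] using h
    have h2 : (univ.filter (fun w => G.Adj v w)) = G.neighborFinset v := by
      ext w; simp
    have hdeg : G.degree v = (univ.filter (fun w => G.Adj v w)).card := by
      rw [h2]; rfl
    have h3 : ((1 : ℝ) - 2 / (2 * (r : ℝ) - 1)) * (n : ℝ) < (G.degree v : ℝ) :=
      lt_of_lt_of_le hδ (by exact_mod_cast G.minDegree_le_degree v)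
    have h5 : ((M v).card : ℝ) = (n : ℝ) - (G.degree v : ℝ) := by
      rw [hdeg]
      push_cast [← h1]
      ring
    have h6 : ((1 : ℝ) - 2 / (2 * (r : ℝ) - 1)) * (n : ℝ) + cb = (n : ℝ) := by
      rw [hcb]
      field_simp
      ring
    linarith
  have hcb0 : (0 : ℝ) ≤ cb := by
    rw [hcb]
    positivity
  -- key bound for each non-neighbor of u
  have pairkey : ∀ v : V, v ≠ u → ¬ G.Adj u v →
      (n : ℝ) / (2 * (r : ℝ) - 1) < ((M v ∩ M u).card : ℝ) := by
    intro v hvu hadj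
    obtain ⟨A, hAcard, hAclq, hAadj⟩ := stmt6_sat_clique G hmax (Ne.symm hvu) hadj
    set I : Finset V := univ.filter (fun p => ∀ a ∈ A, G.Adj a p) with hI
    have hAne : A.Nonempty := by
      rw [← Finset.card_pos]; omega
    have hcover : (univ : Finset V) ⊆ I ∪ A.biUnion (fun a => M a) := by
      intro p _
      by_cases hp : ∀ a ∈ A, G.Adj a p
      · exact Finset.mem_union_left _ (Finset.mem_filter.2 ⟨Finset.mem_univ _, hp⟩)
      · push_neg at hp
        obtain ⟨a, ha, hnap⟩ := hp
        refine Finset.mem_union_right _ (Finset.mem_biUnion.2 ⟨a, ha, ?_⟩)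
        simp [hM, hnap]
    have hcard1 : n ≤ I.card + ∑ a ∈ A, (M a).card := by
      calc n = (univ : Finset V).card := by rw [hn, Finset.card_univ]
        _ ≤ (I ∪ A.biUnion (fun a => M a)).card := Finset.card_le_card hcover
        _ ≤ I.card + (A.biUnion fun a => M a).card := Finset.card_union_le _ _
        _ ≤ I.card + ∑ a ∈ A, (M a).card := by
              exact Nat.add_le_add_left Finset.card_biUnion_le _
    have hsum : (∑ a ∈ A, ((M a).card : ℝ)) < (A.card : ℝ) * cb := by
      have h := Finset.sum_lt_sum_of_nonempty hAne (fun a _ => hMcard a)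
      simpa [Finset.sum_const, nsmul_eq_mul] using h
    have hIMu : I ⊆ M u := by
      intro p hp
      rw [hI, Finset.mem_filter] at hp
      simp only [hM, Finset.mem_filter, Finset.mem_univ, true_and]
      intro hup
      have hclq1 : G.IsNClique A.card A := ⟨hAclq, rfl⟩
      have hclq2 : G.IsNClique (A.card + 1) (insert p A) :=
        hclq1.insert (fun b hb => (hp.2 b hb).symm)
      have hclq3 : G.IsNClique (A.card + 1 + 1) (insert u (insert p A)) := by
        refine hclq2.insert ?_
        intro b hb
        rcases Finset.mem_insert.1 hb with rfl | hbA
        · exact hup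
        · exact (hAadj b hbA).1
      have hA2 : A.card + 1 + 1 = r + 1 := by omega
      rw [hA2] at hclq3
      exact hmax.1 _ hclq3
    have hIMv : I ⊆ M v := by
      intro p hp
      rw [hI, Finset.mem_filter] at hp
      simp only [hM, Finset.mem_filter, Finset.mem_univ, true_and]
      intro hvp
      have hclq1 : G.IsNClique A.card A := ⟨hAclq, rfl⟩
      have hclq2 : G.IsNClique (A.card + 1) (insert p A) :=
        hclq1.insert (fun b hb => (hp.2 b hb).symm)
      have hclq3 : G.IsNClique (A.card + 1 + 1) (insert v (insert p A)) := by
        refine hclq2.insert ?_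
        intro b hb
        rcases Finset.mem_insert.1 hb with rfl | hbA
        · exact hvp
        · exact (hAadj b hbA).2
      have hA2 : A.card + 1 + 1 = r + 1 := by omega
      rw [hA2] at hclq3
      exact hmax.1 _ hclq3
    have hsub : I ⊆ M v ∩ M u := fun p hp => Finset.mem_inter.2 ⟨hIMv hp, hIMu hp⟩
    have hIc : (I.card : ℝ) ≤ ((M v ∩ M u).card : ℝ) := by
      exact_mod_cast Finset.card_le_card hsub
    have hAcR : (A.card : ℝ) = (r : ℝ) - 1 := by
      have h : ((A.card : ℝ) + 2 = (r : ℝ) + 1) := by exact_mod_cast hAcard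
      linarith
    have hn1 : (n : ℝ) ≤ (I.card : ℝ) + ∑ a ∈ A, ((M a).card : ℝ) := by
      exact_mod_cast hcard1
    have hsum' : (∑ a ∈ A, ((M a).card : ℝ)) < ((r : ℝ) - 1) * cb := by
      rw [← hAcR]; exact hsum
    have heq : (n : ℝ) - ((r : ℝ) - 1) * cb = (n : ℝ) / (2 * (r : ℝ) - 1) := by
      rw [hcb]
      field_simp
      linear_combination (-1 : ℝ) * mul_inv_cancel₀ (show (-1 + (r : ℝ) * 2) ≠ 0 by linarith)
    linarith
  have hXI := pairkey x hxu hux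
  have hYI := pairkey y hyu huy
  have hZI := pairkey z hzu huz
  set Sf : Finset V := univ.filter (fun p => G.Adj u p ∧ G.Adj x p ∧ G.Adj y p ∧ G.Adj z p)
    with hSf
  have hSfeq : Sf = univ \ (M u ∪ (M x ∪ (M y ∪ M z))) := by
    ext p
    simp only [hSf, hM, Finset.mem_filter, Finset.mem_univ, true_and, Finset.mem_sdiff,
      Finset.mem_union]
    tauto
  have hcardSf : Sf.card + (M u ∪ (M x ∪ (M y ∪ M z))).card = n := by
    rw [hSfeq, Finset.card_sdiff_of_subset (Finset.subset_univ _)]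
    have h := Finset.card_le_univ (M u ∪ (M x ∪ (M y ∪ M z)))
    rw [Finset.card_univ] at *
    omega
  have hUb : (M u ∪ (M x ∪ (M y ∪ M z))).card ≤
      (M u).card + ((M x \ M u).card + ((M y \ M u).card + (M z \ M u).card)) := by
    have hsub : M u ∪ (M x ∪ (M y ∪ M z)) ⊆
        M u ∪ ((M x \ M u) ∪ ((M y \ M u) ∪ (M z \ M u))) := by
      intro p hp
      by_cases hMu : p ∈ M u
      · exact Finset.mem_union_left _ hMu
      · rcases Finset.mem_union.1 hp with h | h
        · exact absurd h hMu
        · refine Finset.mem_union_right _ ?_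
          rcases Finset.mem_union.1 h with h | h
          · exact Finset.mem_union_left _ (Finset.mem_sdiff.2 ⟨h, hMu⟩)
          · rcases Finset.mem_union.1 h with h | h
            · exact Finset.mem_union_right _
                (Finset.mem_union_left _ (Finset.mem_sdiff.2 ⟨h, hMu⟩))
            · exact Finset.mem_union_right _
                (Finset.mem_union_right _ (Finset.mem_sdiff.2 ⟨h, hMu⟩))
    refine le_trans (Finset.card_le_card hsub) ?_
    refine le_trans (Finset.card_union_le _ _) ?_
    refine Nat.add_le_add_left ?_ _
    refine le_trans (Finset.card_union_le _ _) ?_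
    refine Nat.add_le_add_left ?_ _
    exact Finset.card_union_le _ _
  have dx : (M x \ M u).card + (M x ∩ M u).card = (M x).card :=
    Finset.card_sdiff_add_card_inter _ _
  have dy : (M y \ M u).card + (M y ∩ M u).card = (M y).card :=
    Finset.card_sdiff_add_card_inter _ _
  have dz : (M z \ M u).card + (M z ∩ M u).card = (M z).card :=
    Finset.card_sdiff_add_card_inter _ _
  -- Sf spans no (r-2)-clique
  have hfree2 : ∀ K ⊆ Sf, ¬ G.IsNClique ((r - 3) + 1) K := by
    intro K hKsub hclq
    have hprop : ∀ p ∈ K, G.Adj u p ∧ G.Adj x p ∧ G.Adj y p ∧ G.Adj z p := fun p hp =>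
      (Finset.mem_filter.1 (hKsub hp)).2
    have h1 : G.IsNClique ((r - 3) + 1 + 1) (insert z K) :=
      hclq.insert (fun b hb => (hprop b hb).2.2.2)
    have h2 : G.IsNClique ((r - 3) + 1 + 1 + 1) (insert y (insert z K)) := by
      refine h1.insert ?_
      intro b hb
      rcases Finset.mem_insert.1 hb with rfl | hbK
      · exact ayz
      · exact (hprop b hbK).2.2.1
    have h3 : G.IsNClique ((r - 3) + 1 + 1 + 1 + 1) (insert x (insert y (insert z K))) := by
      refine h2.insert ?_
      intro b hb
      rcases Finset.mem_insert.1 hb with rfl | hb1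
      · exact axy
      · rcases Finset.mem_insert.1 hb1 with rfl | hbK
        · exact axz
        · exact (hprop b hbK).2.1
    have he : (r - 3) + 1 + 1 + 1 + 1 = r + 1 := by omega
    rw [he] at h3
    exact hmax.1 _ h3
  have hdeg2 : ∀ v ∈ Sf, ((Sf.filter (fun w => ¬ G.Adj v w)).card : ℝ) ≤ cb := by
    intro v _
    refine le_of_lt (lt_of_le_of_lt ?_ (hMcard v))
    have hsub2 : Sf.filter (fun w => ¬ G.Adj v w) ⊆ M v := by
      intro p hp
      simp only [hM, Finset.mem_filter, Finset.mem_univ, true_and]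
      exact (Finset.mem_filter.1 hp).2
    exact_mod_cast Finset.card_le_card hsub2
  have htur := stmt6_turan_bound G cb hcb0 (r - 3) Sf hfree2 hdeg2
  have hc3 : ((r - 3 : ℕ) : ℝ) = (r : ℝ) - 3 := by
    rw [Nat.cast_sub hr]
    norm_num
  rw [hc3] at htur
  have hkey : ((r : ℝ) - 3) * cb = (n : ℝ) - 4 * cb + 3 * ((n : ℝ) / (2 * (r : ℝ) - 1)) := by
    rw [hcb]
    field_simp
    linear_combination mul_inv_cancel₀ (show (-1 + (r : ℝ) * 2) ≠ 0 by linarith)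
  have e1 : (Sf.card : ℝ) + ((M u ∪ (M x ∪ (M y ∪ M z))).card : ℝ) = (n : ℝ) := by
    exact_mod_cast hcardSf
  have e2 : ((M u ∪ (M x ∪ (M y ∪ M z))).card : ℝ) ≤ ((M u).card : ℝ) +
      (((M x \ M u).card : ℝ) + (((M y \ M u).card : ℝ) + ((M z \ M u).card : ℝ))) := by
    exact_mod_cast hUb
  have e3 : ((M x \ M u).card : ℝ) + ((M x ∩ M u).card : ℝ) = ((M x).card : ℝ) := by
    exact_mod_cast dx
  have e4 : ((M y \ M u).card : ℝ) + ((M y ∩ M u).card : ℝ) = ((M y).card : ℝ) := by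
    exact_mod_cast dy
  have e5 : ((M z \ M u).card : ℝ) + ((M z ∩ M u).card : ℝ) = ((M z).card : ℝ) := by
    exact_mod_cast dz
  linarith [hMcard u, hMcard x, hMcard y, hMcard z, hXI, hYI, hZI, htur, hkey,
    e1, e2, e3, e4, e5]
end

section
/- Let r ≥ 3, let G be a K_{r+1}-free graph on n vertices with δ(G) > (1 - 2/(2r-1))·n, and let u be a vertex of G whose non-neighborhood is independent. Let N be the subgraph induced on the neighborhood of u. Then N is K_r-free and δ(N) > (1 - 2/(2r-3))·|N|. -/
theorem stmt11 {V : Type*} [Fintype V] (G : SimpleGraph V) [DecidableRel G.Adj]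
    (r : ℕ) (hr : 3 ≤ r) (hfree : G.CliqueFree (r + 1))
    (hδ : ((1 : ℝ) - 2 / (2 * r - 1)) * (Fintype.card V) < G.minDegree)
    (u : V) (hu : ∀ v w : V, v ≠ u → w ≠ u → ¬G.Adj u v → ¬G.Adj u w → ¬G.Adj v w) :
    (G.induce (G.neighborSet u)).CliqueFree r ∧
    ((1 : ℝ) - 2 / (2 * r - 3)) * Fintype.card (G.neighborSet u) <
      (G.induce (G.neighborSet u)).minDegree := by
  classical
  have hrR : (3 : ℝ) ≤ (r : ℝ) := by exact_mod_cast hr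
  have hA : (0 : ℝ) < 2 * (r : ℝ) - 1 := by linarith
  have hB : (0 : ℝ) < 2 * (r : ℝ) - 3 := by linarith
  set s : Set V := G.neighborSet u with hs
  -- Part 1: K_r-freeness
  have part1 : (G.induce s).CliqueFree r := by
    intro t ht
    apply hfree (insert u (t.map (Function.Embedding.subtype _)))
    have hne : u ∉ t.map (Function.Embedding.subtype _) := by
      simp only [Finset.mem_map, Function.Embedding.coe_subtype, Subtype.exists]
      rintro ⟨a, ha, -, rfl⟩
      exact G.irrefl ha
    refine SimpleGraph.IsNClique.insert ?_ ?_
    · constructor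
      · intro a ha b hb hab
        simp only [Finset.coe_map, Set.mem_image, Finset.mem_coe,
          Function.Embedding.coe_subtype] at ha hb
        obtain ⟨x, hx, rfl⟩ := ha
        obtain ⟨y, hy, rfl⟩ := hb
        have : x ≠ y := fun h => hab (by rw [h])
        exact ht.isClique hx hy this
      · rw [Finset.card_map, ht.card_eq]
    · intro b hb
      simp only [Finset.mem_map, Function.Embedding.coe_subtype, Subtype.exists] at hb
      obtain ⟨a, ha, -, rfl⟩ := hb
      exact ha
  refine ⟨part1, ?_⟩
  -- notation
  set n := Fintype.card V with hn
  set m := Fintype.card s with hm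
  have hmn : m ≤ n := Fintype.card_le_of_embedding (Function.Embedding.subtype _)
  have hdegu : G.degree u = m := (G.card_neighborSet_eq_degree u).symm
  have hδm : (G.minDegree : ℝ) ≤ (m : ℝ) := by
    exact_mod_cast hdegu ▸ G.minDegree_le_degree u
  have hδpos : 0 < G.minDegree := by
    have hc : (0 : ℝ) ≤ ((1 : ℝ) - 2 / (2 * r - 1)) * n := by
      have h2 : 2 / (2 * (r : ℝ) - 1) ≤ 1 := by
        rw [div_le_one hA]; linarith
      have : (0:ℝ) ≤ 1 - 2 / (2 * (r:ℝ) - 1) := by linarith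
      exact mul_nonneg this (Nat.cast_nonneg _)
    have : (0 : ℝ) < G.minDegree := lt_of_le_of_lt hc hδ
    exact_mod_cast this
  have hmpos : 0 < m := by
    have : 0 < G.degree u := lt_of_lt_of_le hδpos (G.minDegree_le_degree u)
    omega
  haveI : Nonempty s := Fintype.card_pos_iff.mp hmpos
  -- key degree bound
  have key : ∀ v : s, G.degree (v : V) ≤ (G.induce s).degree v + (n - m) := by
    intro v
    set S : Finset V := s.toFinset with hS
    have hScard : S.card = m := Set.toFinset_card s
    have hdeq : (G.induce s).degree v = (G.neighborFinset (v : V) ∩ S).card := by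
      rw [SimpleGraph.degree]
      refine Finset.card_bij (fun w _ => w.1) ?_ ?_ ?_
      · intro w hw
        rw [SimpleGraph.mem_neighborFinset] at hw
        simp only [Finset.mem_inter, SimpleGraph.mem_neighborFinset, hS,
          Set.mem_toFinset]
        exact ⟨hw, w.2⟩
      · intro a _ b _ hab
        exact Subtype.ext hab
      · intro b hb
        simp only [Finset.mem_inter, SimpleGraph.mem_neighborFinset, hS,
          Set.mem_toFinset] at hb
        exact ⟨⟨b, hb.2⟩, by rw [SimpleGraph.mem_neighborFinset]; exact hb.1, rfl⟩
    have hsplit : (G.neighborFinset (v : V) ∩ S).card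
        + (G.neighborFinset (v : V) \ S).card = G.degree (v : V) :=
      Finset.card_inter_add_card_sdiff _ _
    have hsd : (G.neighborFinset (v : V) \ S).card ≤ n - m := by
      have hsub : G.neighborFinset (v : V) \ S ⊆ Sᶜ := by
        intro x hx
        rw [Finset.mem_compl]
        exact (Finset.mem_sdiff.mp hx).2
      have := Finset.card_le_card hsub
      rwa [Finset.card_compl, hScard] at this
    omega
  -- get a minimal-degree vertex of the induced graph
  obtain ⟨v, hv⟩ := (G.induce s).exists_minimal_degree_vertex
  set d := (G.induce s).minDegree with hd
  have h3 : G.minDegree ≤ d + (n - m) := by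
    calc G.minDegree ≤ G.degree (v : V) := G.minDegree_le_degree _
    _ ≤ (G.induce s).degree v + (n - m) := key v
    _ = d + (n - m) := by rw [hv]
  have h3R : (G.minDegree : ℝ) ≤ (d : ℝ) + ((n : ℝ) - m) := by
    have : ((n - m : ℕ) : ℝ) = (n : ℝ) - m := Nat.cast_sub hmn
    have h3' : (G.minDegree : ℝ) ≤ (d : ℝ) + ((n - m : ℕ) : ℝ) := by exact_mod_cast h3
    rwa [this] at h3'
  -- final arithmetic
  have h1' : (2 * (r : ℝ) - 3) * n < (2 * (r : ℝ) - 1) * G.minDegree := by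
    have he : (1 : ℝ) - 2 / (2 * r - 1) = (2 * (r : ℝ) - 3) / (2 * (r : ℝ) - 1) := by
      field_simp; ring
    rw [he, div_mul_eq_mul_div, div_lt_iff₀ hA] at hδ
    linarith
  rw [show ((1 : ℝ) - 2 / (2 * r - 3)) = (2 * (r : ℝ) - 3 - 2) / (2 * (r : ℝ) - 3) by
    field_simp, div_mul_eq_mul_div, div_lt_iff₀ hB]
  nlinarith [mul_le_mul_of_nonneg_right h3R hB.le, hδm, h1']
end

section
/- The Häggkvist graph H(k) is triangle-free, 4-chromatic, and 10k-regular with 29k vertices, where H(k) is constructed as follows: partition the vertex set into A_1,...,A_5 of size 3k each, B_1,...,B_5 of size 2k each, and C of size 4k; join u ∈ A_i to v ∈ A_j iff i - j ≡ ±1 (mod 5); join u ∈ A_i to v ∈ B_j iff i - j ≡ ±1 (mod 5); join every vertex of C to every vertex of B_1 ∪ ... ∪ B_5. -/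
/-- `i` and `j` differ by `±1` modulo 5. -/
def pentNear (i j : ZMod 5) : Prop := i - j = 1 ∨ j - i = 1

instance : DecidableRel pentNear := fun i j => inferInstanceAs (Decidable (_ ∨ _))

/-- The Häggkvist graph `H(k)`: classes `A_1, …, A_5` of size `3k`, `B_1, …, B_5` of
size `2k` and `C` of size `4k`; `A_i` is joined to `A_j` and to `B_j` iff `i - j ≡ ±1 (mod 5)`,
and `C` is completely joined to `B_1 ∪ ⋯ ∪ B_5`. -/
def haggkvistGraph (k : ℕ) :
    SimpleGraph ((ZMod 5 × Fin (3 * k)) ⊕ ((ZMod 5 × Fin (2 * k)) ⊕ Fin (4 * k))) where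
  Adj x y := match x, y with
    | .inl (i, _), .inl (j, _) => pentNear i j
    | .inl (i, _), .inr (.inl (j, _)) => pentNear i j
    | .inr (.inl (j, _)), .inl (i, _) => pentNear i j
    | .inr (.inl _), .inr (.inr _) => True
    | .inr (.inr _), .inr (.inl _) => True
    | _, _ => False
  symm := by
    constructor
    rintro (⟨i, x⟩ | (⟨i, x⟩ | x)) (⟨j, y⟩ | (⟨j, y⟩ | y)) hadj <;>
      first
        | exact hadj.symm
        | exact Or.symm hadj
        | exact hadj
  loopless := by
    constructor
    rintro (⟨i, x⟩ | (⟨i, x⟩ | x)) hadj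
    · rcases hadj with h | h <;> rw [sub_self] at h <;> exact absurd h (by decide)
    · exact hadj
    · exact hadj

instance haggkvistGraph.instDecidableRelAdj (k : ℕ) :
    DecidableRel (haggkvistGraph k).Adj := fun x y =>
  match x, y with
  | .inl (i, _), .inl (j, _) => inferInstanceAs (Decidable (pentNear i j))
  | .inl (i, _), .inr (.inl (j, _)) => inferInstanceAs (Decidable (pentNear i j))
  | .inr (.inl (j, _)), .inl (i, _) => inferInstanceAs (Decidable (pentNear i j))
  | .inr (.inl _), .inr (.inr _) => inferInstanceAs (Decidable True)
  | .inr (.inr _), .inr (.inl _) => inferInstanceAs (Decidable True)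
  | .inl _, .inr (.inr _) => inferInstanceAs (Decidable False)
  | .inr (.inr _), .inl _ => inferInstanceAs (Decidable False)
  | .inr (.inl _), .inr (.inl _) => inferInstanceAs (Decidable False)
  | .inr (.inr _), .inr (.inr _) => inferInstanceAs (Decidable False)


set_option maxRecDepth 8000
set_option synthInstance.maxHeartbeats 400000

open Finset in
lemma hg_card_filter_sum {α β : Type*} [Fintype α] [Fintype β]
    (p : α ⊕ β → Prop) [DecidablePred p] :
    (univ.filter p).card
      = (univ.filter (fun a => p (Sum.inl a))).card
        + (univ.filter (fun b => p (Sum.inr b))).card := by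
  classical
  rw [← card_disjSum]
  congr 1
  ext x
  cases x <;> simp [mem_disjSum]

open Finset in
lemma hg_card_filter_fst {α β : Type*} [Fintype α] [Fintype β]
    (q : α → Prop) [DecidablePred q] :
    (univ.filter (fun x : α × β => q x.1)).card = (univ.filter q).card * Fintype.card β := by
  classical
  have : (univ.filter (fun x : α × β => q x.1)) = (univ.filter q) ×ˢ univ := by
    ext ⟨a, b⟩; simp
  rw [this, card_product, card_univ]

open Finset in
lemma hg_pent_count : ∀ i : ZMod 5, (univ.filter (fun j => pentNear i j)).card = 2 := by
  decide

lemma hg_key : ¬ ∃ (a : ZMod 5 → Fin 3) (c : Fin 3),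
    (∀ i, a i ≠ a (i + 1)) ∧
    (∀ j, ∃ x : Fin 3, x ≠ c ∧ x ≠ a (j + 1) ∧ x ≠ a (j - 1)) := by decide

/-- proper 3-coloring of the pentagon extended to 4 colors -/
def hg_pentCol : ZMod 5 → Fin 4 := fun i => if i = 0 ∨ i = 2 then 0 else if i = 1 ∨ i = 3 then 1 else 2

lemma hg_pentCol_valid : ∀ i j : ZMod 5, pentNear i j → hg_pentCol i ≠ hg_pentCol j := by decide

lemma hg_pentCol_ne3 : ∀ i : ZMod 5, hg_pentCol i ≠ 3 := by decide

def hg_col (k : ℕ) :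
    (ZMod 5 × Fin (3 * k)) ⊕ ((ZMod 5 × Fin (2 * k)) ⊕ Fin (4 * k)) → Fin 4
  | .inl (i, _) => hg_pentCol i
  | .inr (.inl _) => 3
  | .inr (.inr _) => 0

lemma hg_pent_tri : ∀ i j l : ZMod 5, pentNear i j → pentNear i l → pentNear j l → False := by
  decide


theorem stmt16 (k : ℕ) (hk : 1 ≤ k) :
    (haggkvistGraph k).CliqueFree 3 ∧
    (haggkvistGraph k).chromaticNumber = 4 ∧
    (haggkvistGraph k).IsRegularOfDegree (10 * k) ∧
    Fintype.card ((ZMod 5 × Fin (3 * k)) ⊕ ((ZMod 5 × Fin (2 * k)) ⊕ Fin (4 * k))) =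
      29 * k := by

  classical
  have hcard : Fintype.card ((ZMod 5 × Fin (3 * k)) ⊕ ((ZMod 5 × Fin (2 * k)) ⊕ Fin (4 * k)))
      = 29 * k := by
    simp only [Fintype.card_sum, Fintype.card_prod, Fintype.card_fin, ZMod.card]
    ring
  refine ⟨?_, ?_, ?_, hcard⟩
  · -- triangle-free
    intro s hs
    obtain ⟨u, v, w, huv, huw, hvw, rfl⟩ := Finset.card_eq_three.mp hs.2
    have h01 : (haggkvistGraph k).Adj u v := hs.1 (by simp) (by simp) huv
    have h02 : (haggkvistGraph k).Adj u w := hs.1 (by simp) (by simp) huw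
    have h12 : (haggkvistGraph k).Adj v w := hs.1 (by simp) (by simp) hvw
    rcases u with ⟨i, x⟩ | ⟨j, y⟩ | z <;>
      rcases v with ⟨i', x'⟩ | ⟨j', y'⟩ | z' <;>
      rcases w with ⟨i'', x''⟩ | ⟨j'', y''⟩ | z'' <;>
      simp only [haggkvistGraph] at h01 h02 h12 <;>
      first
        | exact h01
        | exact h02
        | exact h12
        | exact hg_pent_tri _ _ _ h01 h02 h12
        | exact hg_pent_tri _ _ _ h01 h02 (Or.symm h12)
        | exact hg_pent_tri _ _ _ h01 (Or.symm h02) h12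
        | exact hg_pent_tri _ _ _ (Or.symm h01) h02 h12
        | exact hg_pent_tri _ _ _ (Or.symm h01) (Or.symm h02) h12
        | exact hg_pent_tri _ _ _ (Or.symm h01) h02 (Or.symm h12)
        | exact hg_pent_tri _ _ _ h01 (Or.symm h02) (Or.symm h12)
        | exact hg_pent_tri _ _ _ (Or.symm h01) (Or.symm h02) (Or.symm h12)
  · -- chromatic number
    have hcol : (haggkvistGraph k).Colorable 4 := by
      refine ⟨SimpleGraph.Coloring.mk (hg_col k) ?_⟩
      rintro (⟨i, x⟩ | (⟨j, y⟩ | z)) (⟨i', x'⟩ | (⟨j', y'⟩ | z')) hadj <;>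
        simp only [haggkvistGraph] at hadj <;>
        simp only [hg_col, ne_eq] <;>
        first
          | exact hadj.elim
          | exact hg_pentCol_valid _ _ hadj
          | exact hg_pentCol_ne3 _
          | exact (hg_pentCol_ne3 _ ∘ Eq.symm)
          | decide
    have hnot : ¬ (haggkvistGraph k).Colorable 3 := by
      rintro ⟨C⟩
      have h3k : 0 < 3 * k := by omega
      have h2k : 0 < 2 * k := by omega
      have h4k : 0 < 4 * k := by omega
      set a : ZMod 5 → Fin 3 := fun i => C (.inl (i, ⟨0, h3k⟩)) with ha
      set b : ZMod 5 → Fin 3 := fun j => C (.inr (.inl (j, ⟨0, h2k⟩))) with hb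
      set c : Fin 3 := C (.inr (.inr ⟨0, h4k⟩)) with hc
      apply hg_key
      refine ⟨a, c, fun i => ?_, fun j => ⟨b j, ?_, ?_, ?_⟩⟩
      · exact C.valid (show (haggkvistGraph k).Adj (.inl (i, ⟨0, h3k⟩)) (.inl (i + 1, ⟨0, h3k⟩))
          from Or.inr (by ring))
      · exact C.valid (show (haggkvistGraph k).Adj (.inr (.inl (j, ⟨0, h2k⟩)))
          (.inr (.inr ⟨0, h4k⟩)) from trivial)
      · exact fun h => C.valid (show (haggkvistGraph k).Adj (.inl (j + 1, ⟨0, h3k⟩))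
          (.inr (.inl (j, ⟨0, h2k⟩))) from Or.inl (by ring)) h.symm
      · exact fun h => C.valid (show (haggkvistGraph k).Adj (.inl (j - 1, ⟨0, h3k⟩))
          (.inr (.inl (j, ⟨0, h2k⟩))) from Or.inr (by ring)) h.symm
    refine le_antisymm (hcol.chromaticNumber_le) ?_
    by_contra hlt
    rw [not_le] at hlt
    have : (haggkvistGraph k).chromaticNumber ≤ 3 := by
      exact Order.le_of_lt_succ (by exact_mod_cast hlt)
    rw [show ((3:ℕ∞)) = ((3:ℕ):ℕ∞) by norm_num,
      SimpleGraph.chromaticNumber_le_iff_colorable] at this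
    exact hnot this
  · -- regularity
    intro v
    rw [SimpleGraph.degree, SimpleGraph.neighborFinset_eq_filter]
    rcases v with ⟨i, x⟩ | ⟨j, y⟩ | z
    · rw [hg_card_filter_sum, hg_card_filter_sum]
      have e1 : (Finset.univ.filter (fun a : ZMod 5 × Fin (3*k) =>
          (haggkvistGraph k).Adj (.inl (i, x)) (.inl a))).card = 2 * (3 * k) := by
        have hfe : (Finset.univ.filter (fun a : ZMod 5 × Fin (3*k) =>
            (haggkvistGraph k).Adj (.inl (i, x)) (.inl a)))
            = Finset.univ.filter (fun a => pentNear i a.1) :=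
          Finset.filter_congr (fun a _ => Iff.rfl)
        rw [hfe, hg_card_filter_fst, hg_pent_count, Fintype.card_fin]
      have e2 : (Finset.univ.filter (fun a : ZMod 5 × Fin (2*k) =>
          (haggkvistGraph k).Adj (.inl (i, x)) (.inr (.inl a)))).card = 2 * (2 * k) := by
        have hfe : (Finset.univ.filter (fun a : ZMod 5 × Fin (2*k) =>
            (haggkvistGraph k).Adj (.inl (i, x)) (.inr (.inl a))))
            = Finset.univ.filter (fun a => pentNear i a.1) :=
          Finset.filter_congr (fun a _ => Iff.rfl)
        rw [hfe, hg_card_filter_fst, hg_pent_count, Fintype.card_fin]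
      have e3 : (Finset.univ.filter (fun a : Fin (4*k) =>
          (haggkvistGraph k).Adj (.inl (i, x)) (.inr (.inr a)))).card = 0 := by
        rw [Finset.card_eq_zero, Finset.filter_eq_empty_iff]
        intro a _
        exact fun h => h
      rw [e1, e2, e3]
      ring
    · rw [hg_card_filter_sum, hg_card_filter_sum]
      have e1 : (Finset.univ.filter (fun a : ZMod 5 × Fin (3*k) =>
          (haggkvistGraph k).Adj (.inr (.inl (j, y))) (.inl a))).card = 2 * (3 * k) := by
        have hfe : (Finset.univ.filter (fun a : ZMod 5 × Fin (3*k) =>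
            (haggkvistGraph k).Adj (.inr (.inl (j, y))) (.inl a)))
            = Finset.univ.filter (fun a => pentNear j a.1) :=
          Finset.filter_congr (fun a _ => by unfold pentNear haggkvistGraph; exact or_comm)
        rw [hfe, hg_card_filter_fst, hg_pent_count, Fintype.card_fin]
      have e2 : (Finset.univ.filter (fun a : ZMod 5 × Fin (2*k) =>
          (haggkvistGraph k).Adj (.inr (.inl (j, y))) (.inr (.inl a)))).card = 0 := by
        rw [Finset.card_eq_zero, Finset.filter_eq_empty_iff]
        intro a _
        exact fun h => h
      have e3 : (Finset.univ.filter (fun a : Fin (4*k) =>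
          (haggkvistGraph k).Adj (.inr (.inl (j, y))) (.inr (.inr a)))).card = 4 * k := by
        have hfe : (Finset.univ.filter (fun a : Fin (4*k) =>
            (haggkvistGraph k).Adj (.inr (.inl (j, y))) (.inr (.inr a)))) = Finset.univ := by
          rw [Finset.filter_eq_self]; intro a _; trivial
        rw [hfe, Finset.card_univ, Fintype.card_fin]
      rw [e1, e2, e3]
      ring
    · rw [hg_card_filter_sum, hg_card_filter_sum]
      have e1 : (Finset.univ.filter (fun a : ZMod 5 × Fin (3*k) =>
          (haggkvistGraph k).Adj (.inr (.inr z)) (.inl a))).card = 0 := by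
        rw [Finset.card_eq_zero, Finset.filter_eq_empty_iff]
        intro a _
        exact fun h => h
      have e2 : (Finset.univ.filter (fun a : ZMod 5 × Fin (2*k) =>
          (haggkvistGraph k).Adj (.inr (.inr z)) (.inr (.inl a)))).card = 5 * (2 * k) := by
        have hfe : (Finset.univ.filter (fun a : ZMod 5 × Fin (2*k) =>
            (haggkvistGraph k).Adj (.inr (.inr z)) (.inr (.inl a)))) = Finset.univ := by
          rw [Finset.filter_eq_self]; intro a _; trivial
        rw [hfe, Finset.card_univ, Fintype.card_prod, Fintype.card_fin]
        norm_num [ZMod]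
      have e3 : (Finset.univ.filter (fun a : Fin (4*k) =>
          (haggkvistGraph k).Adj (.inr (.inr z)) (.inr (.inr a)))).card = 0 := by
        rw [Finset.card_eq_zero, Finset.filter_eq_empty_iff]
        intro a _
        exact fun h => h
      rw [e1, e2, e3]
      ring
end
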